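/- For every Boolean self-join-free conjunctive query q, every tuple-independent probabilistic database D, and every dissociation Δ of q: P(q) ≤ P(q^Δ), where P(q^Δ) is evaluated on the dissociated database D^Δ. -/

import Mathlib

open scoped Classical

namespace PDB

noncomputable section

/-! ### Monotone DNF formulas over a finite variable set -/

/-- Probability that a monotone DNF formula (given by its finite set of implicants, each a
finite set of positive variables) is true, when each variable `x` is independently true with
probability `p x`. -/
def dnfProb {X : Type*} [Fintype X] (p : X → ℝ) (F : Finset (Finset X)) : ℝ :=
  ∑ ω : X → Bool,
    (∏ x : X, if ω x = true then p x else 1 - p x) *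
      (if ∃ T ∈ F, ∀ x ∈ T, ω x = true then 1 else 0)

/-- A prime implicant of a monotone DNF formula: a minimal implicant. -/
def IsPrimeImplicant {X : Type*} (F : Finset (Finset X)) (T : Finset X) : Prop :=
  T ∈ F ∧ ∀ S ∈ F, S ⊆ T → S = T

variable {A V dom : Type*}

/-! ### Self-join-free conjunctive queries: hierarchy and connectivity.
A self-join-free conjunctive query is given by its atoms: a family `atoms : A → Finset V`
assigning to each of the (pairwise distinct) relation symbols its finite set of variables;
`H` denotes the set of head variables (treated as constants); all other variables are
existential.  A Boolean query has `H = ∅`. -/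

/-- `at(x)`: the atoms among `S` that contain the variable `x`. -/
def atOf (atoms : A → Finset V) (S : Finset A) (x : V) : Finset A :=
  S.filter (fun i => x ∈ atoms i)

/-- The query consisting of the atoms `S` is hierarchical, with the variables in `H`
treated as constants (head variables): for any two existential variables, their atom sets
are comparable or disjoint. -/
def HierOn (atoms : A → Finset V) (S : Finset A) (H : Finset V) : Prop :=
  ∀ x : V, x ∉ H → ∀ y : V, y ∉ H →
    atOf atoms S x ⊆ atOf atoms S y ∨ atOf atoms S x ∩ atOf atoms S y = ∅ ∨
      atOf atoms S y ⊆ atOf atoms S x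

/-- A Boolean query (with all its atoms) is hierarchical. -/
def Hier [Fintype A] (atoms : A → Finset V) : Prop :=
  HierOn atoms Finset.univ ∅

/-- The set of atoms `S` is disconnected: it can be partitioned into two nonempty sets
sharing no variables. -/
def Disconn (atoms : A → Finset V) (S : Finset A) : Prop :=
  ∃ T : Finset A, T ⊆ S ∧ T.Nonempty ∧ (S \ T).Nonempty ∧
    ∀ i ∈ T, ∀ j ∈ S \ T, atoms i ∩ atoms j = ∅

/-- `T` is a connected component of the set of atoms `S`: a maximal connected subset. -/
def IsComp (atoms : A → Finset V) (S T : Finset A) : Prop :=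
  T ⊆ S ∧ T.Nonempty ∧ ¬ Disconn atoms T ∧
    ∀ U : Finset A, T ⊆ U → U ⊆ S → ¬ Disconn atoms U → U = T

/-- `xs` is a cut-set of the query with atoms `S`: a set of its variables whose removal
disconnects the query. -/
def IsCutSet (atoms : A → Finset V) (S : Finset A) (xs : Finset V) : Prop :=
  xs ⊆ S.sup atoms ∧ Disconn (fun i => atoms i \ xs) S

/-- a minimal cut-set (min-cut-set) -/
def MinCut (atoms : A → Finset V) (S : Finset A) (xs : Finset V) : Prop :=
  IsCutSet atoms S xs ∧ ∀ ys : Finset V, ys ⊂ xs → ¬ IsCutSet atoms S ys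

/-- the separator variables of a Boolean query: the variables occurring in every atom -/
def SepVars [Fintype A] [Fintype V] (atoms : A → Finset V) : Finset V :=
  Finset.univ.filter (fun x => ∀ i : A, x ∈ atoms i)

/-- the set of variables of a query -/
def varsOf [Fintype A] (atoms : A → Finset V) : Finset V :=
  Finset.univ.sup atoms

/-! ### Dissociations -/

/-- `Δ` is a dissociation of the query with atoms `atoms` and head variables `H`:
each atom receives extra existential variables of the query that it does not already
contain. -/
def IsDiss [Fintype A] (atoms : A → Finset V) (H : Finset V) (Δ : A → Finset V) : Prop :=
  ∀ i : A, Δ i ⊆ (varsOf atoms \ H) \ atoms i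

/-- the atoms of the dissociated query `q^Δ` -/
def dissAtoms (atoms Δ : A → Finset V) : A → Finset V := fun i => atoms i ∪ Δ i

/-- the partial dissociation order `Δ ≼ Δ'` -/
def dissLE (Δ Δ' : A → Finset V) : Prop := ∀ i : A, Δ i ⊆ Δ' i

/-- a safe dissociation: the dissociated query is hierarchical -/
def SafeDiss [Fintype A] (atoms : A → Finset V) (H : Finset V) (Δ : A → Finset V) : Prop :=
  IsDiss atoms H Δ ∧ HierOn (dissAtoms atoms Δ) Finset.univ H

/-- a minimal safe dissociation: no smaller dissociation (in the order `≼`) is safe -/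
def MinSafeDiss [Fintype A] (atoms : A → Finset V) (H : Finset V) (Δ : A → Finset V) : Prop :=
  SafeDiss atoms H Δ ∧
    ∀ Δ' : A → Finset V, SafeDiss atoms H Δ' → dissLE Δ' Δ → Δ' = Δ

/-! ### Tuple-independent probabilistic databases -/

/-- A tuple-independent probabilistic database for the query with atoms `atoms` over the
finite domain `dom`: each relation `i` is a finite set of tuples (functions from the
variables of the atom to the domain), each carrying a probability. -/
structure DB (atoms : A → Finset V) (dom : Type*) where
  tuples : ∀ i : A, Finset ({x // x ∈ atoms i} → dom)
  prob : ∀ i : A, ({x // x ∈ atoms i} → dom) → ℝ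

/-- all tuple probabilities lie in [0,1] -/
def DB.Valid {atoms : A → Finset V} (D : DB atoms dom) : Prop :=
  ∀ i : A, ∀ t ∈ D.tuples i, 0 ≤ D.prob i t ∧ D.prob i t ≤ 1

/-- the restriction of a valuation of all variables to the tuple format of atom `i` -/
def restrict (atoms : A → Finset V) (i : A) (ν : V → dom) : {x // x ∈ atoms i} → dom :=
  fun x => ν x.1

/-- restriction of a tuple to a smaller variable set -/
def restrictTup {xs ys : Finset V} (h : xs ⊆ ys) (t : {x // x ∈ ys} → dom) :
    {x // x ∈ xs} → dom :=
  fun x => t ⟨x.1, h x.2⟩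

/-- `P(q)`: the probability that the Boolean query with atoms `atoms` is true in a possible
world chosen by independently including each tuple `t` of `D` with probability `p(t)`. -/
def queryProb [Fintype A] (atoms : A → Finset V) (D : DB atoms dom) : ℝ :=
  ∑ W : ∀ i : A, {t // t ∈ D.tuples i} → Bool,
    (∏ i : A, ∏ t : {t // t ∈ D.tuples i},
        if W i t = true then D.prob i t.1 else 1 - D.prob i t.1) *
      (if ∃ ν : V → dom, ∀ i : A,
            ∃ h : restrict atoms i ν ∈ D.tuples i, W i ⟨restrict atoms i ν, h⟩ = true
        then 1 else 0)

/-- The dissociated database `D^Δ`: relation `R_i^{ȳ_i}` contains one copy of each tuple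
`t ∈ R_i` for every assignment of the added variables `ȳ_i` to domain values, with the same
probability as `t`. -/
def dissDB [Fintype dom] (atoms Δ : A → Finset V) (D : DB atoms dom) :
    DB (dissAtoms atoms Δ) dom where
  tuples i := Finset.univ.filter
    (fun t : {x // x ∈ dissAtoms atoms Δ i} → dom =>
      restrictTup (show atoms i ⊆ dissAtoms atoms Δ i from Finset.subset_union_left) t
        ∈ D.tuples i)
  prob i t :=
    D.prob i
      (restrictTup (show atoms i ⊆ dissAtoms atoms Δ i from Finset.subset_union_left) t)

/-- `P(q^Δ)`: the probability of the dissociated query on the dissociated database. -/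
def dissProb [Fintype A] [Fintype dom] (atoms Δ : A → Finset V) (D : DB atoms dom) : ℝ :=
  queryProb (dissAtoms atoms Δ) (dissDB atoms Δ D)

/-- The propagation score `ρ(q)`: the minimum of `P(q^Δ)` over all safe dissociations. -/
def propScore [Fintype A] [Fintype dom] (atoms : A → Finset V)
    (D : DB atoms dom) : ℝ :=
  sInf { r : ℝ | ∃ Δ : A → Finset V, SafeDiss atoms ∅ Δ ∧ r = dissProb atoms Δ D }

/-- the database with all tuple probabilities scaled by the factor `f` -/
def scaleDB {atoms : A → Finset V} (D : DB atoms dom) (f : ℝ) : DB atoms dom where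
  tuples := D.tuples
  prob i t := f * D.prob i t

/-- relation `i` is deterministic: all its tuples have probability 1 (otherwise it is
probabilistic) -/
def Deterministic {atoms : A → Finset V} (D : DB atoms dom) (i : A) : Prop :=
  ∀ t ∈ D.tuples i, D.prob i t = 1

/-- The lineage `F_{q,D}` of the Boolean query on `D`: the monotone DNF over the tuples of
`D` whose implicants correspond to the satisfying assignments of the query. -/
def lineage [Fintype A] [Fintype V] [Fintype dom] (atoms : A → Finset V)
    (D : DB atoms dom) :
    Finset (Finset (Σ i : A, {x // x ∈ atoms i} → dom)) :=
  ((Finset.univ : Finset (V → dom)).filter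
      (fun ν => ∀ i : A, restrict atoms i ν ∈ D.tuples i)).image
    (fun ν => Finset.univ.image
      (fun i : A => (⟨i, restrict atoms i ν⟩ : Σ i : A, {x // x ∈ atoms i} → dom)))

/-- The substitution `θ : D^Δ → D` mapping every tuple of a dissociated relation
`R_i^{ȳ_i}` to its projection onto the original variables of `R_i`. -/
def dissTupleMap (atoms Δ : A → Finset V) :
    (Σ i : A, {x // x ∈ dissAtoms atoms Δ i} → dom) →
      Σ i : A, {x // x ∈ atoms i} → dom :=
  fun t =>
    ⟨t.1, restrictTup (show atoms t.1 ⊆ dissAtoms atoms Δ t.1 from Finset.subset_union_left)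
      t.2⟩

/-! ### Functional dependencies -/

/-- `Determines Γ xs y`: the variable `y` is in the closure `xs⁺` of `xs` under the
functional dependencies `Γ`. -/
inductive Determines (Γ : Set (Finset V × V)) : Finset V → V → Prop
  | mem (xs : Finset V) (y : V) (h : y ∈ xs) : Determines Γ xs y
  | step (xs : Finset V) (fd : Finset V × V) (hfd : fd ∈ Γ)
      (hall : ∀ z ∈ fd.1, Determines Γ xs z) : Determines Γ xs fd.2

/-- The functional dependency `fd` is an FD on the attributes of relation `j` that holds
in the database `D`. -/
def FDHolds (atoms : A → Finset V) (D : DB atoms dom) (j : A) (fd : Finset V × V) : Prop :=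
  ∃ h1 : fd.1 ⊆ atoms j, ∃ h2 : fd.2 ∈ atoms j,
    ∀ t ∈ D.tuples j, ∀ t' ∈ D.tuples j,
      (∀ v : V, ∀ hv : v ∈ fd.1, t ⟨v, h1 hv⟩ = t' ⟨v, h1 hv⟩) →
        t ⟨fd.2, h2⟩ = t' ⟨fd.2, h2⟩

/-! ### Query plans -/

/-- Query plans: atoms, duplicate-eliminating projections (given by the retained head
variables), and k-ary natural joins. -/
inductive Plan (A V : Type*) where
  | atom : A → Plan A V
  | proj : Finset V → Plan A V → Plan A V
  | join : List (Plan A V) → Plan A V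

namespace Plan

/-- the head variables of a plan -/
def hvar (atoms : A → Finset V) : Plan A V → Finset V
  | .atom i => atoms i
  | .proj hv _ => hv
  | .join Ps => Ps.attach.foldr (fun P acc => hvar atoms P.1 ∪ acc) ∅
decreasing_by
  all_goals simp_wf
  all_goals try have := List.sizeOf_lt_of_mem P.2
  all_goals omega

/-- the multiset of atoms used by a plan -/
def atomsOf : Plan A V → Multiset A
  | .atom i => {i}
  | .proj _ P => atomsOf P
  | .join Ps => Ps.attach.foldr (fun P acc => atomsOf P.1 + acc) 0
decreasing_by
  all_goals simp_wf
  all_goals try have := List.sizeOf_lt_of_mem P.2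
  all_goals omega

def isProj : Plan A V → Prop
  | .proj _ _ => True
  | _ => False

def isJoin : Plan A V → Prop
  | .join _ => True
  | _ => False

/-- structural well-formedness: projections only retain available variables, joins are at
least binary, and joins and projections alternate -/
def WF (atoms : A → Finset V) : Plan A V → Prop
  | .atom _ => True
  | .proj hv P => hv ⊆ hvar atoms P ∧ ¬ isProj P ∧ WF atoms P
  | .join Ps => 2 ≤ Ps.length ∧ ∀ P ∈ Ps, ¬ isJoin P ∧ WF atoms P
decreasing_by
  all_goals simp_wf
  all_goals try rename_i h; try have := List.sizeOf_lt_of_mem h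
  all_goals omega

/-- a safe plan: at every join, all subplans have the same head variables -/
def Safe (atoms : A → Finset V) : Plan A V → Prop
  | .atom _ => True
  | .proj _ P => Safe atoms P
  | .join Ps => (∀ P ∈ Ps, Safe atoms P) ∧
      ∀ P ∈ Ps, ∀ Q ∈ Ps, hvar atoms P = hvar atoms Q
decreasing_by
  all_goals simp_wf
  all_goals try rename_i h; try have := List.sizeOf_lt_of_mem h
  all_goals omega

/-- `P` is a (well-formed) query plan for the query with atoms `atoms` and head variables
`H`: it uses every atom exactly once and its output head variables are exactly `H`
(for a Boolean query, `H = ∅`, i.e. all existential variables are projected away). -/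
def IsPlanFor [Fintype A] (atoms : A → Finset V) (H : Finset V) (P : Plan A V) : Prop :=
  WF atoms P ∧ atomsOf P = (Finset.univ : Finset A).val ∧ hvar atoms P = H

/-- the join variables: the union of the head variables of a list of subplans -/
def joinVars (atoms : A → Finset V) (Ps : List (Plan A V)) : Finset V :=
  (Ps.map (hvar atoms)).foldr (· ∪ ·) ∅

/-- Identification of plans up to join order, flattening of nested joins, and removal of
trivial (identity) projections. -/
inductive Equiv (atoms : A → Finset V) : Plan A V → Plan A V → Prop
  | refl (P) : Equiv atoms P P
  | symm {P Q} : Equiv atoms P Q → Equiv atoms Q P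
  | trans {P Q R} : Equiv atoms P Q → Equiv atoms Q R → Equiv atoms P R
  | projCongr (hv) {P Q} : Equiv atoms P Q → Equiv atoms (.proj hv P) (.proj hv Q)
  | joinCongr {Ps Qs} : List.Forall₂ (Equiv atoms) Ps Qs →
      Equiv atoms (.join Ps) (.join Qs)
  | joinPerm {Ps Qs} : Ps.Perm Qs → Equiv atoms (.join Ps) (.join Qs)
  | joinFlatten (Ps Qs Rs) :
      Equiv atoms (.join (Ps ++ .join Qs :: Rs)) (.join (Ps ++ Qs ++ Rs))
  | projTriv {P} (hv) (h : hv = hvar atoms P) : Equiv atoms (.proj hv P) P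

/-- The extensional score semantics of a plan evaluated on the database `D`: output tuples
are represented by total valuations `ν : V → dom` (only the values on the head variables
matter; duplicates are represented canonically by the default value `d₀` outside the head
variables).  Joins multiply scores, and duplicate-eliminating projections combine the
scores `s_1, …, s_n` of the tuples projecting to a common output tuple to
`1 - ∏ (1 - s_i)`. -/
def score [Fintype V] [Fintype dom] (atoms : A → Finset V) (D : DB atoms dom) (d₀ : dom) :
    Plan A V → (V → dom) → ℝ
  | .atom i, ν =>
      if restrict atoms i ν ∈ D.tuples i then D.prob i (restrict atoms i ν) else 0
  | .proj hv P, ν =>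
      1 - ∏ μ ∈ Finset.univ.filter (fun μ : V → dom =>
            (∀ v : V, v ∉ hvar atoms P → μ v = d₀) ∧ ∀ v ∈ hv, μ v = ν v),
          (1 - score atoms D d₀ P μ)
  | .join Ps, ν => (Ps.attach.map (fun P => score atoms D d₀ P.1 ν)).prod
decreasing_by
  all_goals simp_wf
  all_goals try have := List.sizeOf_lt_of_mem P.2
  all_goals omega

/-- the score of a Boolean plan -/
def bscore [Fintype V] [Fintype dom] [Inhabited dom] (atoms : A → Finset V)
    (D : DB atoms dom) (P : Plan A V) : ℝ :=
  score atoms D default P (fun _ => default)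

/-- Dropping the dissociated variables from a plan (for a dissociated query) to obtain the
corresponding plan `P^Δ` for the original query: every projection list is restricted to
the variables actually available in the original query. -/
def eraseTo (atoms : A → Finset V) : Plan A V → Plan A V
  | .atom i => .atom i
  | .proj hv P => .proj (hv ∩ hvar atoms (eraseTo atoms P)) (eraseTo atoms P)
  | .join Ps => .join (Ps.attach.map (fun P => eraseTo atoms P.1))
decreasing_by
  all_goals simp_wf
  all_goals try have := List.sizeOf_lt_of_mem P.2
  all_goals omega

/-- The dissociation `Δ^P` corresponding to a plan `P`: for each join operator with join
variables `JVar = ⋃_j HVar(P_j)`, every relation occurring in subplan `P_j` receives the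
variables `JVar ∖ HVar(P_j)`. -/
def dissOf (atoms : A → Finset V) : Plan A V → A → Finset V
  | .atom _ => fun _ => ∅
  | .proj _ P => dissOf atoms P
  | .join Ps => fun i =>
      Ps.attach.foldr (fun P acc =>
        (if i ∈ atomsOf P.1 then
            (joinVars atoms Ps \ hvar atoms P.1) ∪ dissOf atoms P.1 i
          else ∅) ∪ acc) ∅
decreasing_by
  all_goals simp_wf
  all_goals try have := List.sizeOf_lt_of_mem P.2
  all_goals omega

end Plan

/-- The recursive algorithm `MP` enumerating the minimal query plans of the query with
atom set `S` and head variables `H` (head variables are treated as constants):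
* if the query has a single atom, return the projection of that atom onto the head
  variables;
* if the query (after removing the head variables) is disconnected, return any join of
  minimal plans of its connected components (each component keeping the head variables
  occurring in it);
* otherwise, for any minimal cut-set `ys` of the query minus its head variables, return
  the plan projecting `ys` away from any minimal plan of the query with head variables
  `H ∪ ys`. -/
inductive MPrel (atoms : A → Finset V) : Finset A → Finset V → Plan A V → Prop
  | single (i : A) (H : Finset V) : MPrel atoms {i} H (.proj H (.atom i))
  | disc (S : Finset A) (H : Finset V) (parts : List (Finset A)) (Ps : List (Plan A V))
      (hdup : parts.Nodup) (hlen : 2 ≤ parts.length)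
      (hparts : ∀ T : Finset A, T ∈ parts ↔ IsComp (fun i => atoms i \ H) S T)
      (hlen2 : parts.length = Ps.length)
      (hPs : ∀ n : ℕ, ∀ h1 : n < parts.length, ∀ h2 : n < Ps.length,
        MPrel atoms parts[n] (H ∩ (parts[n]).sup atoms) Ps[n]) :
      MPrel atoms S H (.join Ps)
  | conn (S : Finset A) (H : Finset V) (ys : Finset V) (P : Plan A V)
      (hcard : 2 ≤ S.card)
      (hconn : ¬ Disconn (fun i => atoms i \ H) S)
      (hcut : MinCut (fun i => atoms i \ H) S ys)
      (hP : MPrel atoms S (H ∪ ys) P) :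
      MPrel atoms S H (.proj H P)


section Aux

variable {X : Type*} [Fintype X]

def wgt (p : X → ℝ) (ω : X → Bool) : ℝ := ∏ x, if ω x = true then p x else 1 - p x

def eProb (p : X → ℝ) (E : (X → Bool) → Prop) : ℝ :=
  ∑ ω : X → Bool, wgt p ω * (if E ω then 1 else 0)

lemma wgt_nonneg {p : X → ℝ} (hp : ∀ x, 0 ≤ p x ∧ p x ≤ 1) (ω : X → Bool) : 0 ≤ wgt p ω := by
  refine Finset.prod_nonneg fun x _ => ?_
  split
  · exact (hp x).1
  · linarith [(hp x).2]

lemma eProb_congr {p : X → ℝ} {E E' : (X → Bool) → Prop} (h : ∀ ω, E ω ↔ E' ω) :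
    eProb p E = eProb p E' := by
  unfold eProb
  exact Finset.sum_congr rfl fun ω _ => by rw [if_congr (h ω) rfl rfl]

lemma sum_wgt (p : X → ℝ) : ∑ ω : X → Bool, wgt p ω = 1 := by
  have h1 : (Finset.univ : Finset (X → Bool))
      = Fintype.piFinset (fun _ : X => (Finset.univ : Finset Bool)) :=
    Fintype.piFinset_univ.symm
  unfold wgt
  rw [h1]
  have h2 := Finset.prod_univ_sum (fun _ : X => (Finset.univ : Finset Bool))
    (fun x j => if j = true then p x else 1 - p x)
  rw [← h2]
  simp

lemma curry_eProb {A : Type*} [Fintype A] {κ : A → Type*} [∀ i, Fintype (κ i)]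
    {instW : Fintype (∀ i, κ i → Bool)}
    (q : ∀ i, κ i → ℝ) (E : (∀ i, κ i → Bool) → Prop) :
    (∑ W ∈ @Finset.univ _ instW,
        (∏ i, ∏ t, if W i t = true then q i t else 1 - q i t) * (if E W then 1 else 0))
      = eProb (fun x : Σ i, κ i => q x.1 x.2) (fun ω => E (fun i t => ω ⟨i, t⟩)) := by
  unfold eProb wgt
  refine (Finset.sum_equiv (Equiv.piCurry fun _ _ => Bool) (fun _ => by simp)
    (fun ω _ => ?_)).symm
  congr 1
  · have h1 : (Finset.univ : Finset (Σ i, κ i)) = Finset.univ.sigma (fun _ => Finset.univ) :=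
      Finset.univ_sigma_univ.symm
    rw [h1, Finset.prod_sigma]
    rfl

set_option maxHeartbeats 1000000 in
lemma marg {S : Type*} [Fintype S] (p : X → ℝ) (ι : S → X) (hι : Function.Injective ι)
    (E : (S → Bool) → Prop) :
    eProb p (fun ω => E (ω ∘ ι)) = eProb (p ∘ ι) E := by
  set C := {x : X // x ∉ Set.range ι} with hC
  let e₀ : S ⊕ C ≃ X :=
    ((Equiv.ofInjective ι hι).sumCongr (Equiv.refl C)).trans
      (Equiv.sumCompl (fun x => x ∈ Set.range ι))
  have he₀l : ∀ s : S, e₀ (Sum.inl s) = ι s := fun s => rfl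
  have he₀r : ∀ c : C, e₀ (Sum.inr c) = c.1 := fun c => rfl
  let e : ((S → Bool) × (C → Bool)) ≃ (X → Bool) :=
    (Equiv.sumArrowEquivProdArrow S C Bool).symm.trans (e₀.arrowCongr (Equiv.refl Bool))
  have heval : ∀ z : (S → Bool) × (C → Bool), ∀ u : S ⊕ C, e z (e₀ u) = Sum.elim z.1 z.2 u := by
    rintro ⟨τ, τ'⟩ u
    simp only [e, Equiv.trans_apply, Equiv.arrowCongr_apply, Function.comp_apply,
      Equiv.refl_apply, Equiv.symm_apply_apply]
    cases u <;> rfl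
  have hel : ∀ z : (S → Bool) × (C → Bool), (e z) ∘ ι = z.1 := by
    intro z; funext s
    have := heval z (Sum.inl s)
    rw [he₀l] at this
    simpa using this
  have hw : ∀ z : (S → Bool) × (C → Bool),
      wgt p (e z) = wgt (p ∘ ι) z.1 * wgt (fun c : C => p c.1) z.2 := by
    intro z
    unfold wgt
    rw [← Equiv.prod_comp e₀ (fun x => if (e z) x = true then p x else 1 - p x),
      Fintype.prod_sum_type]
    congr 1
    · exact Finset.prod_congr rfl fun s _ => by rw [heval z (Sum.inl s), he₀l]; rfl
    · exact Finset.prod_congr rfl fun c _ => by rw [heval z (Sum.inr c), he₀r]; rfl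
  calc eProb p (fun ω => E (ω ∘ ι))
      = ∑ z : (S → Bool) × (C → Bool), wgt p (e z) * (if E ((e z) ∘ ι) then 1 else 0) :=
        (Equiv.sum_comp e (fun ω => wgt p ω * (if E (ω ∘ ι) then 1 else 0))).symm
    _ = ∑ z : (S → Bool) × (C → Bool),
          (wgt (p ∘ ι) z.1 * (if E z.1 then 1 else 0)) * wgt (fun c : C => p c.1) z.2 := by
        refine Finset.sum_congr rfl fun z _ => ?_
        rw [hw z, hel z]; ring
    _ = ∑ τ : S → Bool, ∑ τ' : C → Bool,
          (wgt (p ∘ ι) τ * (if E τ then 1 else 0)) * wgt (fun c : C => p c.1) τ' :=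
        Fintype.sum_prod_type (f := fun z : (S → Bool) × (C → Bool) =>
          (wgt (p ∘ ι) z.1 * (if E z.1 then 1 else 0)) * wgt (fun c : C => p c.1) z.2)
    _ = (∑ τ : S → Bool, wgt (p ∘ ι) τ * (if E τ then 1 else 0)) *
          (∑ τ' : C → Bool, wgt (fun c : C => p c.1) τ') :=
        (Finset.sum_mul_sum Finset.univ Finset.univ
          (fun τ => wgt (p ∘ ι) τ * (if E τ then 1 else 0))
          (fun τ' => wgt (fun c : C => p c.1) τ')).symm
    _ = eProb (p ∘ ι) E := by
        have h1 : (∑ τ' : C → Bool, wgt (fun c : C => p c.1) τ') = 1 := by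
          have h2 := sum_wgt (fun c : C => p c.1)
          convert h2 using 2
          exact congr_arg (fun i : Fintype (C → Bool) => @Finset.univ _ i)
            (Subsingleton.elim _ _)
        rw [h1, mul_one]
        rfl


lemma ind_ineq {P Q R S : Prop} (hPS : P → R ∨ S) (hQR : Q → R) (hQS : Q → S) :
    ((if P then (1:ℝ) else 0) + (if Q then 1 else 0))
      ≤ (if R then 1 else 0) + (if S then 1 else 0) := by
  by_cases hQ : Q
  · rw [if_pos hQ, if_pos (hQR hQ), if_pos (hQS hQ)]
    have : (if P then (1:ℝ) else 0) ≤ 1 := by split <;> norm_num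
    linarith
  · rw [if_neg hQ]
    by_cases hP : P
    · rcases hPS hP with h | h
      · rw [if_pos hP, if_pos h]
        have : (0:ℝ) ≤ if S then (1:ℝ) else 0 := by split <;> norm_num
        linarith
      · rw [if_pos hP, if_pos h]
        have : (0:ℝ) ≤ if R then (1:ℝ) else 0 := by split <;> norm_num
        linarith
    · rw [if_neg hP]
      have h1 : (0:ℝ) ≤ if R then (1:ℝ) else 0 := by split <;> norm_num
      have h2 : (0:ℝ) ≤ if S then (1:ℝ) else 0 := by split <;> norm_num
      linarith

lemma merge_le (p : X → ℝ) (hp : ∀ x, 0 ≤ p x ∧ p x ≤ 1) (a b : X) (hab : a ≠ b)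
    (hpab : p a = p b) (E : (X → Bool) → Prop)
    (hmono : ∀ ω ω' : X → Bool, (∀ x, ω x = true → ω' x = true) → E ω → E ω')
    (hsplit : ∀ ω : X → Bool,
      E (Function.update (Function.update ω a true) b true) →
        E (Function.update (Function.update ω a true) b false) ∨
          E (Function.update (Function.update ω a false) b true)) :
    eProb p (fun ω => E (Function.update ω b (ω a))) ≤ eProb p E := by
  set T : (X → Bool) → (X → Bool) :=
    fun ω => Function.update (Function.update ω a (ω b)) b (ω a) with hT
  have hTswap : ∀ (ω : X → Bool) (x : X), T ω x = ω (Equiv.swap a b x) := by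
    intro ω x
    by_cases hxb : x = b
    · subst hxb; simp [hT, Equiv.swap_apply_right]
    · by_cases hxa : x = a
      · subst hxa
        simp [hT, Function.update_of_ne hxb, Equiv.swap_apply_left,
          Function.update_of_ne hab]
      · simp [hT, Function.update_of_ne hxb, Function.update_of_ne hxa,
          Equiv.swap_apply_of_ne_of_ne hxa hxb]
  have hTinv : Function.Involutive T := by
    intro ω; funext x
    rw [hTswap, hTswap, Equiv.swap_apply_self]
  have hwT : ∀ ω, wgt p (T ω) = wgt p ω := by
    intro ω
    have hps : ∀ x, p (Equiv.swap a b x) = p x := by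
      intro x
      by_cases hxa : x = a
      · subst hxa; rw [Equiv.swap_apply_left, hpab]
      · by_cases hxb : x = b
        · subst hxb; rw [Equiv.swap_apply_right, hpab]
        · rw [Equiv.swap_apply_of_ne_of_ne hxa hxb]
    unfold wgt
    calc (∏ x, if T ω x = true then p x else 1 - p x)
        = ∏ x, (if ω (Equiv.swap a b x) = true then p (Equiv.swap a b x)
            else 1 - p (Equiv.swap a b x)) := by
          refine Finset.prod_congr rfl fun x _ => ?_
          rw [hTswap, hps]
      _ = ∏ x, (if ω x = true then p x else 1 - p x) :=
          Equiv.prod_comp (Equiv.swap a b) (fun x => if ω x = true then p x else 1 - p x)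
  have hsum : ∀ E' : (X → Bool) → Prop,
      eProb p E' * 2 = ∑ ω : X → Bool, wgt p ω *
        ((if E' ω then (1:ℝ) else 0) + (if E' (T ω) then 1 else 0)) := by
    intro E'
    have h2 : ∑ ω : X → Bool, wgt p ω * (if E' (T ω) then (1:ℝ) else 0)
        = ∑ ω : X → Bool, wgt p ω * (if E' ω then (1:ℝ) else 0) := by
      have h3 := Equiv.sum_comp (Function.Involutive.toPerm T hTinv)
        (fun ω => wgt p ω * (if E' ω then (1:ℝ) else 0))
      simp only [Function.Involutive.coe_toPerm] at h3
      refine Eq.trans ?_ h3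
      refine Finset.sum_congr rfl fun ω _ => ?_
      rw [hwT]; congr 1
    have h4 : ∑ ω : X → Bool, wgt p ω *
        ((if E' ω then (1:ℝ) else 0) + (if E' (T ω) then 1 else 0))
        = (∑ ω : X → Bool, wgt p ω * (if E' ω then (1:ℝ) else 0))
          + ∑ ω : X → Bool, wgt p ω * (if E' (T ω) then (1:ℝ) else 0) := by
      rw [← Finset.sum_add_distrib]
      exact Finset.sum_congr rfl fun ω _ => by ring
    rw [h4, h2]
    unfold eProb
    ring
  have hpoint : ∀ ω : X → Bool,
      wgt p ω * ((if E (Function.update ω b (ω a)) then (1:ℝ) else 0) +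
        (if E (Function.update (T ω) b (T ω a)) then 1 else 0))
      ≤ wgt p ω * ((if E ω then (1:ℝ) else 0) + (if E (T ω) then 1 else 0)) := by
    intro ω
    refine mul_le_mul_of_nonneg_left ?_ (wgt_nonneg hp ω)
    obtain ⟨va, hva⟩ : ∃ v, ω a = v := ⟨_, rfl⟩
    obtain ⟨vb, hvb⟩ : ∃ v, ω b = v := ⟨_, rfl⟩
    -- pointwise value of double updates
    have upd_eq : ∀ (v w : Bool) (x : X),
        Function.update (Function.update ω a v) b w x
          = if x = b then w else if x = a then v else ω x := by
      intro v w x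
      simp [Function.update_apply]
    -- the four canonical rewrites
    have e1 : Function.update ω b (ω a)
        = Function.update (Function.update ω a va) b va := by
      funext x
      rw [upd_eq]
      by_cases hxb : x = b
      · simp [hxb, Function.update_apply, hva]
      · by_cases hxa : x = a
        · simp [hxb, hxa, Function.update_apply, hva]
        · simp [hxb, hxa, Function.update_apply]
    have e2 : T ω = Function.update (Function.update ω a vb) b va := by
      rw [← hva, ← hvb]
    have hTa : T ω a = vb := by
      rw [e2, upd_eq]
      simp [hab]
    have e3 : Function.update (T ω) b (T ω a)
        = Function.update (Function.update ω a vb) b vb := by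
      rw [hTa, e2, Function.update_idem]
    have e0 : ω = Function.update (Function.update ω a va) b vb := by
      funext x
      rw [upd_eq]
      by_cases hxb : x = b
      · simp [hxb, hvb]
      · by_cases hxa : x = a
        · simp [hxb, hxa, hva, hab]
        · simp [hxb, hxa]
    have i1 : (if E (Function.update ω b (ω a)) then (1:ℝ) else 0)
        = if E (Function.update (Function.update ω a va) b va) then 1 else 0 :=
      congrArg (fun w => if E w then (1:ℝ) else 0) e1
    have i2 : (if E (Function.update (T ω) b (T ω a)) then (1:ℝ) else 0)
        = if E (Function.update (Function.update ω a vb) b vb) then 1 else 0 :=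
      congrArg (fun w => if E w then (1:ℝ) else 0) e3
    have i3 : (if E ω then (1:ℝ) else 0)
        = if E (Function.update (Function.update ω a va) b vb) then 1 else 0 :=
      congrArg (fun w => if E w then (1:ℝ) else 0) e0
    have i4 : (if E (T ω) then (1:ℝ) else 0)
        = if E (Function.update (Function.update ω a vb) b va) then 1 else 0 :=
      congrArg (fun w => if E w then (1:ℝ) else 0) e2
    -- monotonicity facts
    have h10 : ∀ x, Function.update (Function.update ω a false) b false x = true →
        Function.update (Function.update ω a true) b false x = true := by
      intro x hx
      rw [upd_eq] at hx ⊢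
      by_cases hxb : x = b
      · rw [if_pos hxb] at hx ⊢; exact hx
      · rw [if_neg hxb] at hx ⊢
        by_cases hxa : x = a
        · rw [if_pos hxa] at hx; exact absurd hx (by simp)
        · rw [if_neg hxa] at hx ⊢; exact hx
    have h01 : ∀ x, Function.update (Function.update ω a false) b false x = true →
        Function.update (Function.update ω a false) b true x = true := by
      intro x hx
      rw [upd_eq] at hx ⊢
      by_cases hxb : x = b
      · rw [if_pos hxb]
      · rw [if_neg hxb] at hx ⊢; exact hx
    have key := ind_ineq (hsplit ω) (hmono _ _ h10) (hmono _ _ h01)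
    cases va <;> cases vb <;> rw [i1, i2, i3, i4] <;> linarith [key]
  have hle : eProb p (fun ω => E (Function.update ω b (ω a))) * 2 ≤ eProb p E * 2 := by
    rw [hsum (fun ω => E (Function.update ω b (ω a))), hsum E]
    exact Finset.sum_le_sum fun ω _ => hpoint ω
  linarith


lemma diss_le {Y I : Type*} [Fintype Y]
    (p : Y → ℝ) (hp : ∀ y, 0 ≤ p y ∧ p y ≤ 1)
    (θ : X → Y) (sec : Y → X) (hsec : ∀ y, θ (sec y) = y)
    (C : I → Prop) (reads : I → Set X)
    (hinj : ∀ ν, Set.InjOn θ (reads ν)) :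
    eProb p (fun τ => ∃ ν, C ν ∧ ∀ x ∈ reads ν, τ (θ x) = true)
      ≤ eProb (p ∘ θ) (fun ω => ∃ ν, C ν ∧ ∀ x ∈ reads ν, ω x = true) := by
  classical
  set R : Finset X → X → X := fun s x => if x ∈ s then sec (θ x) else x with hR
  set Es : Finset X → ((X → Bool) → Prop) :=
    fun s ω => ∃ ν, C ν ∧ ∀ x ∈ reads ν, ω (R s x) = true with hEs
  have hθR : ∀ (s : Finset X) (x : X), θ (R s x) = θ x := by
    intro s x
    by_cases h : x ∈ s
    · simp [hR, h, hsec]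
    · simp [hR, h]
  have hsecInj : Function.Injective sec := fun y y' h => by
    rw [← hsec y, ← hsec y', h]
  have hstep : ∀ (s : Finset X) (b : X), b ∉ s → sec (θ b) ≠ b →
      eProb (p ∘ θ) (Es (insert b s)) ≤ eProb (p ∘ θ) (Es s) := by
    intro s b hbs hbne
    have hbrange : ∀ y, sec y ≠ b := by
      intro y hy
      apply hbne
      rw [← hy, hsec]
    have hkey : ∀ (ω : X → Bool) (x : X),
        Function.update ω b (ω (sec (θ b))) (R s x) = ω (R (insert b s) x) := by
      intro ω x
      by_cases hxs : x ∈ s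
      · have h1 : R s x = sec (θ x) := by simp [hR, hxs]
        have h2 : R (insert b s) x = sec (θ x) := by
          simp [hR, Finset.mem_insert, hxs]
        rw [h1, h2, Function.update_apply, if_neg (hbrange (θ x))]
      · by_cases hxb : x = b
        · subst hxb
          have h1 : R s x = x := by simp [hR, hxs]
          have h2 : R (insert x s) x = sec (θ x) := by
            simp [hR, Finset.mem_insert]
          rw [h1, h2, Function.update_apply, if_pos rfl]
        · have h1 : R s x = x := by simp [hR, hxs]
          have h2 : R (insert b s) x = x := by
            simp [hR, Finset.mem_insert, hxs, hxb]
          rw [h1, h2, Function.update_apply, if_neg hxb]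
    have hmerge : ∀ ω : X → Bool,
        Es s (Function.update ω b (ω (sec (θ b)))) ↔ Es (insert b s) ω := by
      intro ω
      constructor
      · rintro ⟨ν, hC, h⟩
        exact ⟨ν, hC, fun x hx => by rw [← hkey ω x]; exact h x hx⟩
      · rintro ⟨ν, hC, h⟩
        exact ⟨ν, hC, fun x hx => by rw [hkey ω x]; exact h x hx⟩
    have upd2 : ∀ (ω : X → Bool) (v w : Bool) (z : X),
        Function.update (Function.update ω (sec (θ b)) v) b w z
          = if z = b then w else if z = sec (θ b) then v else ω z := by
      intro ω v w z
      simp [Function.update_apply]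
    have hle := merge_le (p ∘ θ) (fun x => hp (θ x)) (sec (θ b)) b hbne
      (by show p (θ (sec (θ b))) = p (θ b); rw [hsec]) (Es s)
      (by
        rintro ω ω' hww ⟨ν, hC, h⟩
        exact ⟨ν, hC, fun x hx => hww _ (h x hx)⟩)
      (by
        rintro ω ⟨ν, hC, h⟩
        by_cases hb : ∃ x ∈ reads ν, R s x = b
        · right
          refine ⟨ν, hC, fun x hx => ?_⟩
          rw [upd2]
          by_cases hxb : R s x = b
          · rw [if_pos hxb]
          · rw [if_neg hxb]
            have hxa : R s x ≠ sec (θ b) := by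
              intro hxa
              obtain ⟨x0, hx0, hx0b⟩ := hb
              have h1 : θ x = θ b := by rw [← hθR s x, hxa, hsec]
              have h2 : θ x0 = θ b := by rw [← hθR s x0, hx0b]
              have hxx0 := hinj ν hx hx0 (h1.trans h2.symm)
              rw [hxx0] at hxa
              rw [hx0b] at hxa
              exact hbne hxa.symm
            rw [if_neg hxa]
            have h3 := h x hx
            rw [upd2, if_neg hxb, if_neg hxa] at h3
            exact h3
        · left
          push_neg at hb
          refine ⟨ν, hC, fun x hx => ?_⟩
          have hxb : R s x ≠ b := hb x hx
          have h3 := h x hx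
          rw [upd2, if_neg hxb] at h3
          rw [upd2, if_neg hxb]
          by_cases hxa : R s x = sec (θ b)
          · rw [if_pos hxa]
          · rw [if_neg hxa]
            rw [if_neg hxa] at h3
            exact h3)
    calc eProb (p ∘ θ) (Es (insert b s))
        = eProb (p ∘ θ) (fun ω => Es s (Function.update ω b (ω (sec (θ b))))) :=
          eProb_congr (fun ω => (hmerge ω).symm)
      _ ≤ eProb (p ∘ θ) (Es s) := hle
  have hind : ∀ s : Finset X, (∀ x ∈ s, sec (θ x) ≠ x) →
      eProb (p ∘ θ) (Es s) ≤ eProb (p ∘ θ) (Es ∅) := by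
    intro s
    induction s using Finset.induction_on with
    | empty => intro _; exact le_refl _
    | insert b s hbs ih =>
      intro hins
      refine le_trans (hstep s b hbs (hins b (Finset.mem_insert_self b s))) ?_
      exact ih fun x hx => hins x (Finset.mem_insert_of_mem hx)
  set sfull : Finset X := Finset.univ.filter (fun x => sec (θ x) ≠ x) with hsfull
  have hfull : ∀ x, R sfull x = sec (θ x) := by
    intro x
    by_cases h : sec (θ x) = x
    · have : x ∉ sfull := by simp [hsfull, h]
      simp [hR, this, h]
    · have : x ∈ sfull := by simp [hsfull, h]
      simp [hR, this]
  have hpsec : (p ∘ θ) ∘ sec = p := funext fun y => by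
    show p (θ (sec y)) = p y
    rw [hsec]
  calc eProb p (fun τ => ∃ ν, C ν ∧ ∀ x ∈ reads ν, τ (θ x) = true)
      = eProb ((p ∘ θ) ∘ sec) (fun τ => ∃ ν, C ν ∧ ∀ x ∈ reads ν, τ (θ x) = true) := by
        rw [hpsec]
    _ = eProb (p ∘ θ)
          (fun ω => ∃ ν, C ν ∧ ∀ x ∈ reads ν, (ω ∘ sec) (θ x) = true) :=
        (marg (p ∘ θ) sec hsecInj (fun τ => ∃ ν, C ν ∧ ∀ x ∈ reads ν, τ (θ x) = true)).symm
    _ = eProb (p ∘ θ) (Es sfull) := by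
        refine eProb_congr fun ω => ?_
        constructor
        · rintro ⟨ν, hC, h⟩
          exact ⟨ν, hC, fun x hx => by rw [hfull]; exact h x hx⟩
        · rintro ⟨ν, hC, h⟩
          refine ⟨ν, hC, fun x hx => ?_⟩
          have := h x hx
          rw [hfull] at this
          exact this
    _ ≤ eProb (p ∘ θ) (Es ∅) := hind sfull fun x hx => (Finset.mem_filter.mp hx).2
    _ = eProb (p ∘ θ) (fun ω => ∃ ν, C ν ∧ ∀ x ∈ reads ν, ω x = true) := by
        refine eProb_congr fun ω => ?_
        constructor
        · rintro ⟨ν, hC, h⟩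
          refine ⟨ν, hC, fun x hx => ?_⟩
          have := h x hx
          rw [show R ∅ x = x by simp [hR]] at this
          exact this
        · rintro ⟨ν, hC, h⟩
          exact ⟨ν, hC, fun x hx => by rw [show R ∅ x = x by simp [hR]]; exact h x hx⟩

end Aux


section Apply

variable {A V dom : Type*} [Fintype A] [Fintype V] [Fintype dom]

/-- tuple probabilities on the full sigma space of potential tuples (0 outside the db) -/
def pY (atoms : A → Finset V) (D : DB atoms dom) :
    (Σ i : A, ({x // x ∈ atoms i} → dom)) → ℝ :=
  fun y => if y.2 ∈ D.tuples y.1 then D.prob y.1 y.2 else 0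

lemma queryProb_eq (atoms : A → Finset V) (D : DB atoms dom) :
    queryProb atoms D = eProb (pY atoms D)
      (fun τ => ∃ ν : V → dom, ∀ i : A,
        restrict atoms i ν ∈ D.tuples i ∧ τ ⟨i, restrict atoms i ν⟩ = true) := by
  have step0 : queryProb atoms D
      = eProb (fun x : Σ i : A, {t // t ∈ D.tuples i} => D.prob x.1 x.2.1)
        (fun ω => ∃ ν : V → dom, ∀ i : A,
          ∃ h : restrict atoms i ν ∈ D.tuples i, ω ⟨i, ⟨restrict atoms i ν, h⟩⟩ = true) := by
    unfold queryProb
    exact curry_eProb (fun i (t : {t // t ∈ D.tuples i}) => D.prob i t.1)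
      (fun W => ∃ ν : V → dom, ∀ i : A,
        ∃ h : restrict atoms i ν ∈ D.tuples i, W i ⟨restrict atoms i ν, h⟩ = true)
  refine step0.trans ?_
  set ι : (Σ i : A, {t // t ∈ D.tuples i}) → (Σ i : A, ({x // x ∈ atoms i} → dom)) :=
    fun x => ⟨x.1, x.2.1⟩ with hι
  have hinj : Function.Injective ι := by
    rintro ⟨i, t⟩ ⟨j, u⟩ h
    have h1 : i = j := congrArg Sigma.fst h
    subst h1
    have h2 : t.1 = u.1 := by
      have := (Sigma.mk.inj_iff.mp h).2
      exact eq_of_heq this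
    rw [Subtype.ext h2]
  have hq : (pY atoms D) ∘ ι = fun x : Σ i : A, {t // t ∈ D.tuples i} => D.prob x.1 x.2.1 := by
    funext x
    show (if x.2.1 ∈ D.tuples x.1 then D.prob x.1 x.2.1 else 0) = D.prob x.1 x.2.1
    rw [if_pos x.2.2]
  calc eProb (fun x : Σ i : A, {t // t ∈ D.tuples i} => D.prob x.1 x.2.1)
        (fun ω => ∃ ν : V → dom, ∀ i : A,
          ∃ h : restrict atoms i ν ∈ D.tuples i, ω ⟨i, ⟨restrict atoms i ν, h⟩⟩ = true)
      = eProb ((pY atoms D) ∘ ι)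
        (fun ω => ∃ ν : V → dom, ∀ i : A,
          ∃ h : restrict atoms i ν ∈ D.tuples i, ω ⟨i, ⟨restrict atoms i ν, h⟩⟩ = true) := by
        rw [hq]
    _ = eProb (pY atoms D)
        (fun τ => ∃ ν : V → dom, ∀ i : A,
          ∃ h : restrict atoms i ν ∈ D.tuples i, (τ ∘ ι) ⟨i, ⟨restrict atoms i ν, h⟩⟩ = true) :=
        (marg (pY atoms D) ι hinj
          (fun ω => ∃ ν : V → dom, ∀ i : A,
            ∃ h : restrict atoms i ν ∈ D.tuples i, ω ⟨i, ⟨restrict atoms i ν, h⟩⟩ = true)).symm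
    _ = eProb (pY atoms D)
        (fun τ => ∃ ν : V → dom, ∀ i : A,
          restrict atoms i ν ∈ D.tuples i ∧ τ ⟨i, restrict atoms i ν⟩ = true) := by
        refine eProb_congr fun τ => ?_
        constructor
        · rintro ⟨ν, h⟩
          refine ⟨ν, fun i => ?_⟩
          obtain ⟨hm, hr⟩ := h i
          exact ⟨hm, hr⟩
        · rintro ⟨ν, h⟩
          refine ⟨ν, fun i => ?_⟩
          obtain ⟨hm, hr⟩ := h i
          exact ⟨hm, hr⟩

end Apply


/-- Upper query bounds.  For every Boolean self-join-free conjunctive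
query `q`, every tuple-independent probabilistic database `D`, and every dissociation `Δ`
of `q`: `P(q) ≤ P(q^Δ)`, where `P(q^Δ)` is evaluated on the dissociated database `D^Δ`. -/
theorem dissociation_upper_query_bound
    {A V dom : Type*} [Fintype A] [Fintype V] [Fintype dom]
    (atoms : A → Finset V) (D : DB atoms dom) (hD : D.Valid)
    (Δ : A → Finset V) (hΔ : IsDiss atoms ∅ Δ) :
    queryProb atoms D ≤ dissProb atoms Δ D := by
  classical
  rcases isEmpty_or_nonempty (V → dom) with hve | hne
  · have h1 : queryProb atoms D = 0 := by
      unfold queryProb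
      refine Finset.sum_eq_zero fun W _ => ?_
      have hno : ¬ ∃ ν : V → dom, ∀ i : A, ∃ h : restrict atoms i ν ∈ D.tuples i,
          W i ⟨restrict atoms i ν, h⟩ = true := by
        rintro ⟨ν, -⟩
        exact hve.false ν
      rw [if_neg hno, mul_zero]
    have h2 : dissProb atoms Δ D = 0 := by
      unfold dissProb queryProb
      refine Finset.sum_eq_zero fun W _ => ?_
      have hno : ¬ ∃ ν : V → dom, ∀ i : A,
          ∃ h : restrict (dissAtoms atoms Δ) i ν ∈ (dissDB atoms Δ D).tuples i,
            W i ⟨restrict (dissAtoms atoms Δ) i ν, h⟩ = true := by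
        rintro ⟨ν, -⟩
        exact hve.false ν
      rw [if_neg hno, mul_zero]
    rw [h1, h2]
  · obtain ⟨ν₀⟩ := hne
    set θ := dissTupleMap (dom := dom) atoms Δ with hθdef
    set sec : (Σ i : A, ({x // x ∈ atoms i} → dom)) →
        (Σ i : A, ({x // x ∈ dissAtoms atoms Δ i} → dom)) :=
      fun y => ⟨y.1, fun x => if h : x.1 ∈ atoms y.1 then y.2 ⟨x.1, h⟩ else ν₀ x.1⟩ with hsecdef
    have hsec : ∀ y, θ (sec y) = y := by
      rintro ⟨i, t⟩
      have h2 : restrictTup (show atoms i ⊆ dissAtoms atoms Δ i from Finset.subset_union_left)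
          ((sec ⟨i, t⟩).2) = t := by
        funext x
        show (if h : x.1 ∈ atoms i then t ⟨x.1, h⟩ else ν₀ x.1) = t x
        rw [dif_pos x.2]
      exact congrArg (Sigma.mk i) h2
    have hp : ∀ y : Σ i : A, ({x // x ∈ atoms i} → dom),
        0 ≤ pY atoms D y ∧ pY atoms D y ≤ 1 := by
      rintro ⟨i, t⟩
      show 0 ≤ (if t ∈ D.tuples i then D.prob i t else 0) ∧
        (if t ∈ D.tuples i then D.prob i t else 0) ≤ 1
      by_cases h : t ∈ D.tuples i
      · rw [if_pos h]
        exact hD i t h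
      · rw [if_neg h]
        exact ⟨le_refl 0, zero_le_one⟩
    have hmem : ∀ (ν : V → dom) (i : A),
        (restrict (dissAtoms atoms Δ) i ν ∈ (dissDB atoms Δ D).tuples i)
          ↔ restrict atoms i ν ∈ D.tuples i := by
      intro ν i
      show _ ∈ Finset.univ.filter _ ↔ _
      rw [Finset.mem_filter]
      exact ⟨fun h => h.2, fun h => ⟨Finset.mem_univ _, h⟩⟩
    have hθc : ∀ (ν : V → dom) (i : A),
        θ ⟨i, restrict (dissAtoms atoms Δ) i ν⟩
          = (⟨i, restrict atoms i ν⟩ : Σ i : A, ({x // x ∈ atoms i} → dom)) :=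
      fun ν i => rfl
    have hpθ : pY (dissAtoms atoms Δ) (dissDB atoms Δ D) = (pY atoms D) ∘ θ := by
      funext x
      obtain ⟨i, u⟩ := x
      show (if u ∈ (dissDB atoms Δ D).tuples i then (dissDB atoms Δ D).prob i u else 0)
        = (if restrictTup (show atoms i ⊆ dissAtoms atoms Δ i from Finset.subset_union_left) u
              ∈ D.tuples i
            then D.prob i
              (restrictTup (show atoms i ⊆ dissAtoms atoms Δ i from Finset.subset_union_left) u)
            else 0)
      have hm : u ∈ (dissDB atoms Δ D).tuples i
          ↔ restrictTup (show atoms i ⊆ dissAtoms atoms Δ i from Finset.subset_union_left) u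
              ∈ D.tuples i := by
        show _ ∈ Finset.univ.filter _ ↔ _
        rw [Finset.mem_filter]
        exact ⟨fun h => h.2, fun h => ⟨Finset.mem_univ _, h⟩⟩
      exact if_congr hm rfl rfl
    have hinj : ∀ ν : V → dom, Set.InjOn θ (Set.range (fun i : A =>
        (⟨i, restrict (dissAtoms atoms Δ) i ν⟩ :
          Σ i : A, ({x // x ∈ dissAtoms atoms Δ i} → dom)))) := by
      intro ν
      rintro x ⟨i, rfl⟩ y ⟨j, rfl⟩ hxy
      have h1 : i = j := congrArg Sigma.fst hxy
      subst h1
      rfl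
    have hkey := diss_le (pY atoms D) hp θ sec hsec
      (fun ν : V → dom => ∀ i : A, restrict atoms i ν ∈ D.tuples i)
      (fun ν : V → dom => Set.range (fun i : A =>
        (⟨i, restrict (dissAtoms atoms Δ) i ν⟩ :
          Σ i : A, ({x // x ∈ dissAtoms atoms Δ i} → dom))))
      hinj
    rw [queryProb_eq atoms D]
    rw [show dissProb atoms Δ D = eProb (pY (dissAtoms atoms Δ) (dissDB atoms Δ D))
      (fun τ => ∃ ν : V → dom, ∀ i : A,
        restrict (dissAtoms atoms Δ) i ν ∈ (dissDB atoms Δ D).tuples i ∧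
          τ ⟨i, restrict (dissAtoms atoms Δ) i ν⟩ = true) from
      queryProb_eq (dissAtoms atoms Δ) (dissDB atoms Δ D)]
    rw [hpθ]
    refine le_trans (le_of_eq ?_) (le_trans hkey (le_of_eq ?_))
    · refine eProb_congr fun τ => ?_
      constructor
      · rintro ⟨ν, h⟩
        refine ⟨ν, fun i => (h i).1, ?_⟩
        rintro x ⟨i, rfl⟩
        rw [hθc ν i]
        exact (h i).2
      · rintro ⟨ν, hC, h⟩
        refine ⟨ν, fun i => ⟨hC i, ?_⟩⟩
        have := h _ ⟨i, rfl⟩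
        rw [hθc ν i] at this
        exact this
    · refine eProb_congr fun ω => ?_
      constructor
      · rintro ⟨ν, hC, h⟩
        exact ⟨ν, fun i => ⟨(hmem ν i).mpr (hC i), h _ ⟨i, rfl⟩⟩⟩
      · rintro ⟨ν, h⟩
        refine ⟨ν, fun i => (hmem ν i).mp (h i).1, ?_⟩
        rintro x ⟨i, rfl⟩
        exact (h i).2


end

end PDB
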